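/- Let C ⊆ V be independent in G, N = |V|, and let Σ(G,C) be the set of bijections σ : {1,…,N} → V such that σ⁻¹(x) < σ⁻¹(y) whenever y ∈ C and x ∼ y. For a bijection σ, let Δ_σ = {p ∈ Δ(V) : p_{σ(1)} ≤ p_{σ(2)} ≤ … ≤ p_{σ(N)}}. Then M(G,C) = ⋃_{σ ∈ Σ(G,C)} Δ_σ. -/

import Mathlib

/-- The polytope of `C`-modes of a graph `G`, inside the probability simplex. -/
def modePolytope {V : Type*} [Fintype V] (G : SimpleGraph V) (C : Set V) :
    Set (V → ℝ) :=
  {p | (∀ v, 0 ≤ p v) ∧ (∑ v, p v = 1) ∧ ∀ x ∈ C, ∀ y, G.Adj x y → p y ≤ p x}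

/-- The simplex of probability distributions that are monotone along the
ordering `σ` of `V`. -/
def orderSimplex {V : Type*} [Fintype V] (σ : Fin (Fintype.card V) ≃ V) :
    Set (V → ℝ) :=
  {p | (∀ v, 0 ≤ p v) ∧ (∑ v, p v = 1) ∧
    ∀ i j : Fin (Fintype.card V), i ≤ j → p (σ i) ≤ p (σ j)}

/-- For an independent `C`, the mode polytope is the union of the simplices
`Δ_σ` over all orderings `σ` of `V` such that `σ⁻¹ x < σ⁻¹ y` whenever `y ∈ C`
and `x ∼ y`. -/
theorem modePolytope_eq_union_orderSimplices {V : Type*} [Fintype V]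
    (G : SimpleGraph V) (C : Set V)
    (hInd : ∀ x ∈ C, ∀ y ∈ C, ¬ G.Adj x y) :
    modePolytope G C =
      ⋃ σ ∈ {σ : Fin (Fintype.card V) ≃ V |
          ∀ x y, y ∈ C → G.Adj x y → σ.symm x < σ.symm y},
        orderSimplex σ := by
  classical
  ext p
  simp only [Set.mem_iUnion, Set.mem_setOf_eq]
  constructor
  · rintro ⟨hpos, hsum, hmode⟩
    -- key function for sorting
    set key : V → ℝ ×ₗ ℕ := fun v => toLex (p v, if v ∈ C then 1 else 0) with hkey
    set e : Fin (Fintype.card V) ≃ V := (Fintype.equivFin V).symm with he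
    set f : Fin (Fintype.card V) → ℝ ×ₗ ℕ := key ∘ e with hf
    set σ : Fin (Fintype.card V) ≃ V := (Tuple.sort f).trans e with hσ
    have hmono : Monotone (f ∘ Tuple.sort f) := Tuple.monotone_sort f
    have hval : ∀ v : V, f (Tuple.sort f (σ.symm v)) = key v := by
      intro v
      have : Tuple.sort f (σ.symm v) = e.symm v := by
        simp [hσ, Equiv.symm_trans_apply]
      rw [this]
      simp [hf]
    -- strict key inequality forces strict position inequality
    have hstrict : ∀ x y : V, key x < key y → σ.symm x < σ.symm y := by
      intro x y hxy
      by_contra h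
      push_neg at h
      have := hmono h
      simp only [Function.comp_apply, hval] at this
      exact absurd (lt_of_lt_of_le hxy this) (lt_irrefl _)
    refine ⟨σ, ?_, hpos, hsum, ?_⟩
    · intro x y hyC hadj
      apply hstrict
      have hpxy : p x ≤ p y := hmode y hyC x hadj.symm
      rcases lt_or_eq_of_le hpxy with h | h
      · exact Prod.Lex.left _ _ h
      · have hxC : x ∉ C := fun hxC => hInd x hxC y hyC hadj
        have : (if x ∈ C then 1 else 0 : ℕ) < (if y ∈ C then 1 else 0) := by
          simp [hxC, hyC]
        have : key x < key y := by
          simp only [hkey]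
          rw [h]
          exact Prod.Lex.right (p y) this
        exact this
    · intro i j hij
      have h2 : f (Tuple.sort f i) ≤ f (Tuple.sort f j) := hmono hij
      have h3 : key (σ i) ≤ key (σ j) := by
        exact h2
      have := Prod.Lex.monotone_fst _ _ h3
      simpa [hkey] using this
  · rintro ⟨σ, hσ, hpos, hsum, hmono⟩
    refine ⟨hpos, hsum, ?_⟩
    intro x hxC y hadj
    have h := hσ y x hxC hadj.symm
    have := hmono _ _ h.le
    simpa using this
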